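/- arXiv:1701.06438 — 2 statements merged into one kernel-verified Lean document; each statement's English description precedes it below -/
import Mathlib

section
/- Let N ≥ 1, let S be the N×N real matrix with S_{ii} = 1 for all i, S_{i+1,i} = −1 for i = 1,…,N−1, and all other entries zero, and let P = diag(1, 1/2, …, 1/N). Then the symmetric tridiagonal matrix Q = P·S + Sᵀ·P, whose entries are Q_{ii} = 2/i, Q_{i,i+1} = Q_{i+1,i} = −1/(i+1), and Q_{ij} = 0 for |i−j| ≥ 2, is positive definite. -/
open Matrix
open Finset


lemma keyIneq (u : ℕ → ℝ) (n : ℕ) :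
    (∑ k ∈ range n, ((1:ℝ)/(k+1) - 1/(k+2)) * (u k)^2)
      + (1/(n+1:ℝ)) * (if n = 0 then (0:ℝ) else u (n-1))^2
    ≤ ∑ k ∈ range n, 2 * ((1:ℝ)/(k+1)) * u k * (u k - if k = 0 then 0 else u (k-1)) := by
  induction n with
  | zero => simp
  | succ m ih =>
    rw [Finset.sum_range_succ, Finset.sum_range_succ]
    have h1 : (0:ℝ) < 1/(m+1 : ℝ) := by positivity
    set w : ℝ := if m = 0 then 0 else u (m-1) with hw
    simp only [Nat.succ_ne_zero, if_false, Nat.succ_sub_one]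
    push_cast
    have e : ((m:ℝ)+1+1) = (m:ℝ)+2 := by ring
    rw [e]
    nlinarith [mul_nonneg h1.le (sq_nonneg (u m - w)), ih]


/-- With `S` the platoon matrix and `P = diag(1, 1/2, …, 1/N)`,
the symmetric tridiagonal matrix `Q = P·S + Sᵀ·P` has entries `Q_{ii} = 2/i`,
`Q_{i,i+1} = Q_{i+1,i} = −1/(i+1)` (1-indexed; 0-indexed below) and
`Q_{ij} = 0` for `|i−j| ≥ 2`, and `Q` is positive definite. -/
theorem platoon_tridiagonal_posDef {N : ℕ} (hN : 1 ≤ N)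
    (S : Matrix (Fin N) (Fin N) ℝ)
    (hS : ∀ i j : Fin N,
      S i j = if i = j then 1 else if (i : ℕ) = (j : ℕ) + 1 then -1 else 0)
    (P : Matrix (Fin N) (Fin N) ℝ)
    (hP : P = Matrix.diagonal fun i : Fin N => (1 : ℝ) / ((i : ℕ) + 1))
    (Q : Matrix (Fin N) (Fin N) ℝ)
    (hQ : Q = P * S + Sᵀ * P) :
    (∀ i : Fin N, Q i i = 2 / ((i : ℕ) + 1)) ∧
    (∀ i j : Fin N, (i : ℕ) + 1 = (j : ℕ) →
      Q i j = -(1 / ((j : ℕ) + 1)) ∧ Q j i = -(1 / ((j : ℕ) + 1))) ∧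
    (∀ i j : Fin N, 2 ≤ |(i : ℤ) - (j : ℤ)| → Q i j = 0) ∧
    Q.PosDef := by
  set d : Fin N → ℝ := fun i => (1:ℝ) / ((i:ℕ) + 1) with hd
  have hQe : ∀ i j : Fin N, Q i j = d i * S i j + S j i * d j := by
    intro i j
    rw [hQ, hP, Matrix.add_apply, Matrix.diagonal_mul, Matrix.mul_diagonal,
      Matrix.transpose_apply]
  refine ⟨?_, ?_, ?_, ?_⟩
  · intro i
    rw [hQe, hS, if_pos rfl]
    simp [hd]; ring
  · intro i j hij
    have h1 : i ≠ j := by intro h; rw [h] at hij; omega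
    have h2 : (i:ℕ) ≠ (j:ℕ) + 1 := by omega
    have h3 : j ≠ i := fun h => h1 h.symm
    have h4 : (j:ℕ) = (i:ℕ) + 1 := hij.symm
    rw [hQe i j, hQe j i, hS, hS, if_neg h1, if_neg h2, if_neg h3, if_pos h4]
    constructor <;> (simp [hd]; try ring)
  · intro i j hij
    have habs : ((i:ℤ) - (j:ℤ)) ≤ -2 ∨ 2 ≤ (i:ℤ) - (j:ℤ) := by
      rcases abs_cases ((i:ℤ) - (j:ℤ)) with ⟨h, _⟩ | ⟨h, _⟩ <;> omega
    have h1 : i ≠ j := by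
      intro h; rw [h] at habs; omega
    have h2 : (i:ℕ) ≠ (j:ℕ) + 1 := by omega
    have h3 : j ≠ i := fun h => h1 h.symm
    have h4 : (j:ℕ) ≠ (i:ℕ) + 1 := by omega
    rw [hQe, hS, hS, if_neg h1, if_neg h2, if_neg h3, if_neg h4]
    ring
  · rw [Matrix.posDef_iff_dotProduct_mulVec]
    constructor
    · -- IsHermitian
      ext i j
      simp only [Matrix.conjTranspose_apply, star_trivial, hQe]
      ring
    · intro x hx
      -- (S *ᵥ x) i = x i - x_{i-1}
      have hSx : ∀ i : Fin N, (S *ᵥ x) i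
          = x i - (if h : (i:ℕ) = 0 then 0 else x ⟨(i:ℕ)-1, by omega⟩) := by
        intro i
        have hsplit : ∀ j : Fin N, S i j
            = (if j = i then (1:ℝ) else 0) + (if (i:ℕ) = (j:ℕ)+1 then -1 else 0) := by
          intro j
          rw [hS]
          rcases eq_or_ne i j with h | h
          · have : (i:ℕ) ≠ (j:ℕ)+1 := by omega
            simp [h, this]
          · have h' : j ≠ i := fun hh => h hh.symm
            simp [h, h']
        simp only [Matrix.mulVec, dotProduct, hsplit, add_mul, Finset.sum_add_distrib,
          ite_mul, one_mul, zero_mul, neg_mul, Finset.sum_ite_eq' Finset.univ i x]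
        simp only [Finset.mem_univ, if_true]
        rw [sub_eq_add_neg]
        congr 1
        by_cases h0 : (i:ℕ) = 0
        · rw [dif_pos h0, neg_zero]
          apply Finset.sum_eq_zero
          intro j _
          rw [if_neg (by omega)]
        · rw [dif_neg h0]
          rw [Finset.sum_eq_single (⟨(i:ℕ)-1, by omega⟩ : Fin N)]
          · rw [if_pos (by simp; omega)]
          · intro j _ hj
            rw [if_neg]
            intro hc
            apply hj
            apply Fin.ext
            simp
            omega
          · intro h; exact absurd (Finset.mem_univ _) h
      -- quadratic form
      set u : ℕ → ℝ := fun k => if h : k < N then x ⟨k, h⟩ else 0 with hu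
      have hform : star x ⬝ᵥ Q *ᵥ x
          = ∑ k ∈ range N, 2 * ((1:ℝ)/(k+1)) * u k * (u k - if k = 0 then 0 else u (k-1)) := by
        rw [hQ, hP]
        rw [Matrix.add_mulVec, dotProduct_add]
        rw [← Matrix.mulVec_mulVec, ← Matrix.mulVec_mulVec]
        rw [Matrix.dotProduct_mulVec (star x) Sᵀ, Matrix.vecMul_transpose]
        have hstar : star x = x := by simp
        rw [hstar]
        have l1 : x ⬝ᵥ (Matrix.diagonal (fun i : Fin N => (1:ℝ)/((i:ℕ)+1)) *ᵥ (S *ᵥ x))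
            = ∑ i : Fin N, x i * (d i * (S *ᵥ x) i) := by
          simp [dotProduct, Matrix.mulVec_diagonal, hd]
        have l2 : (S *ᵥ x) ⬝ᵥ (Matrix.diagonal (fun i : Fin N => (1:ℝ)/((i:ℕ)+1)) *ᵥ x)
            = ∑ i : Fin N, (S *ᵥ x) i * (d i * x i) := by
          simp [dotProduct, Matrix.mulVec_diagonal, hd]
        rw [l1, l2, ← Finset.sum_add_distrib]
        rw [← Fin.sum_univ_eq_sum_range
          (fun k => 2 * ((1:ℝ)/(k+1)) * u k * (u k - if k = 0 then 0 else u (k-1))) N]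
        apply Finset.sum_congr rfl
        intro i _
        have hx1 : u (i:ℕ) = x i := by rw [hu]; simp [dif_pos i.isLt]
        have hx2 : (if (i:ℕ) = 0 then (0:ℝ) else u ((i:ℕ)-1))
            = (if h : (i:ℕ) = 0 then (0:ℝ) else x ⟨(i:ℕ)-1, by omega⟩) := by
          by_cases h0 : (i:ℕ) = 0
          · simp [h0]
          · rw [if_neg h0, dif_neg h0, hu]
            simp [dif_pos (show (i:ℕ)-1 < N by omega)]
        rw [hSx i, hx1, hx2, hd]
        push_cast
        ring
      have key := keyIneq u N
      rw [← hform] at key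
      have hterm : ∀ k ∈ range N, (0:ℝ) ≤ ((1:ℝ)/(k+1) - 1/(k+2)) * (u k)^2 := by
        intro k _
        apply mul_nonneg _ (sq_nonneg _)
        have h := one_div_le_one_div_of_le (show (0:ℝ) < (k:ℝ)+1 by positivity)
          (show ((k:ℝ)+1) ≤ (k:ℝ)+2 by linarith)
        linarith
      obtain ⟨i, hi⟩ : ∃ i, x i ≠ 0 := Function.ne_iff.mp hx
      have hpos : (0:ℝ) < ∑ k ∈ range N, ((1:ℝ)/(k+1) - 1/(k+2)) * (u k)^2 := by
        apply Finset.sum_pos' hterm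
        refine ⟨(i:ℕ), Finset.mem_range.mpr i.isLt, ?_⟩
        have hui : u (i:ℕ) ≠ 0 := by rw [hu]; simpa [dif_pos i.isLt] using hi
        have hsq : (0:ℝ) < (u (i:ℕ))^2 :=
          lt_of_le_of_ne (sq_nonneg _) (Ne.symm (pow_ne_zero 2 hui))
        have h := one_div_lt_one_div_of_lt (show (0:ℝ) < ((i:ℕ):ℝ)+1 by positivity)
          (show (((i:ℕ):ℝ)+1) < ((i:ℕ):ℝ)+2 by linarith)
        apply mul_pos _ hsq
        linarith
      have htail : (0:ℝ) ≤ (1/(N+1:ℝ)) * (if N = 0 then (0:ℝ) else u (N-1))^2 := by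
        positivity
      linarith
end

section
/- Let M̲ > 0, M̄ > 0, let ξ ∈ (−M̲, M̄), and define ε(ξ) = ln((1 + ξ/M̲)/(1 − ξ/M̄)). If |ε(ξ)| ≤ ε̄ for some ε̄ ≥ 0, then −M̲·(e^{ε̄} − 1)/(e^{ε̄} + M̲/M̄) ≤ ξ ≤ M̄·(e^{ε̄} − 1)/(e^{ε̄} + M̄/M̲); moreover these two bounds satisfy −M̲ < −M̲·(e^{ε̄} − 1)/(e^{ε̄} + M̲/M̄) and M̄·(e^{ε̄} − 1)/(e^{ε̄} + M̄/M̲) < M̄, so ξ is confined to a compact subinterval strictly inside (−M̲, M̄). -/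
/-- If `ξ ∈ (-M̲, M̄)` and the transformed error
`ε(ξ) = ln((1 + ξ/M̲)/(1 - ξ/M̄))` satisfies `|ε(ξ)| ≤ ε̄`, then
`-M̲·(e^ε̄ - 1)/(e^ε̄ + M̲/M̄) ≤ ξ ≤ M̄·(e^ε̄ - 1)/(e^ε̄ + M̄/M̲)`, and these
bounds lie strictly inside `(-M̲, M̄)`. -/
theorem bounded_transformed_error_confines_xi
    (Mlo Mhi : ℝ) (hlo : 0 < Mlo) (hhi : 0 < Mhi)
    (ξ : ℝ) (hξ : ξ ∈ Set.Ioo (-Mlo) Mhi)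
    (εbar : ℝ) (hεbar : 0 ≤ εbar)
    (h : |Real.log ((1 + ξ / Mlo) / (1 - ξ / Mhi))| ≤ εbar) :
    (-(Mlo * (Real.exp εbar - 1) / (Real.exp εbar + Mlo / Mhi)) ≤ ξ ∧
      ξ ≤ Mhi * (Real.exp εbar - 1) / (Real.exp εbar + Mhi / Mlo)) ∧
    -Mlo < -(Mlo * (Real.exp εbar - 1) / (Real.exp εbar + Mlo / Mhi)) ∧
    Mhi * (Real.exp εbar - 1) / (Real.exp εbar + Mhi / Mlo) < Mhi := by
  obtain ⟨h1, h2⟩ := hξ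
  set E := Real.exp εbar with hE
  have hE1 : 1 ≤ E := by
    rw [hE, ← Real.exp_zero]; exact Real.exp_le_exp.2 hεbar
  have ha : 0 < 1 + ξ / Mlo := by
    have : -1 < ξ / Mlo := by
      rw [lt_div_iff₀ hlo]; linarith
    linarith
  have hb : 0 < 1 - ξ / Mhi := by
    have : ξ / Mhi < 1 := by
      rw [div_lt_one hhi]; exact h2
    linarith
  have hr : 0 < (1 + ξ / Mlo) / (1 - ξ / Mhi) := div_pos ha hb
  obtain ⟨hl, hu⟩ := abs_le.1 h
  have hru : (1 + ξ / Mlo) / (1 - ξ / Mhi) ≤ E := by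
    calc (1 + ξ / Mlo) / (1 - ξ / Mhi)
        = Real.exp (Real.log ((1 + ξ / Mlo) / (1 - ξ / Mhi))) := (Real.exp_log hr).symm
      _ ≤ E := Real.exp_le_exp.2 hu
  have hrl : Real.exp (-εbar) ≤ (1 + ξ / Mlo) / (1 - ξ / Mhi) := by
    calc Real.exp (-εbar) ≤ Real.exp (Real.log ((1 + ξ / Mlo) / (1 - ξ / Mhi))) :=
          Real.exp_le_exp.2 hl
      _ = _ := Real.exp_log hr
  have hinv : Real.exp (-εbar) = 1 / E := by
    rw [hE, Real.exp_neg]; ring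
  -- a ≤ E * b
  have hab : 1 + ξ / Mlo ≤ E * (1 - ξ / Mhi) := by
    have := (div_le_iff₀ hb).1 hru
    linarith
  -- b ≤ E * a
  have hEpos : 0 < E := lt_of_lt_of_le one_pos hE1
  have hba : 1 - ξ / Mhi ≤ E * (1 + ξ / Mlo) := by
    rw [hinv] at hrl
    have := (div_le_div_iff₀ hEpos hb).1 hrl
    nlinarith
  have Hab : Mhi * (Mlo + ξ) ≤ E * (Mlo * (Mhi - ξ)) := by
    have := mul_le_mul_of_nonneg_left hab (le_of_lt (mul_pos hlo hhi))
    have e1 : (Mlo * Mhi) * (1 + ξ / Mlo) = Mhi * (Mlo + ξ) := by field_simp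
    have e2 : (Mlo * Mhi) * (E * (1 - ξ / Mhi)) = E * (Mlo * (Mhi - ξ)) := by field_simp
    linarith [e1 ▸ e2 ▸ this]
  have Hba : Mlo * (Mhi - ξ) ≤ E * (Mhi * (Mlo + ξ)) := by
    have := mul_le_mul_of_nonneg_left hba (le_of_lt (mul_pos hlo hhi))
    have e1 : (Mlo * Mhi) * (1 - ξ / Mhi) = Mlo * (Mhi - ξ) := by field_simp
    have e2 : (Mlo * Mhi) * (E * (1 + ξ / Mlo)) = E * (Mhi * (Mlo + ξ)) := by field_simp
    linarith [e1 ▸ e2 ▸ this]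
  have hd1 : 0 < E + Mlo / Mhi := by positivity
  have hd2 : 0 < E + Mhi / Mlo := by positivity
  refine ⟨⟨?_, ?_⟩, ?_, ?_⟩
  · rw [neg_le, le_div_iff₀ hd1, ← mul_le_mul_iff_of_pos_right hhi]
    have e : -ξ * (E + Mlo / Mhi) * Mhi = -ξ * (E * Mhi + Mlo) := by field_simp
    rw [e]; nlinarith [Hba]
  · rw [le_div_iff₀ hd2, ← mul_le_mul_iff_of_pos_right hlo]
    have e : ξ * (E + Mhi / Mlo) * Mlo = ξ * (E * Mlo + Mhi) := by field_simp
    rw [e]; nlinarith [Hab]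
  · rw [neg_lt_neg_iff, div_lt_iff₀ hd1]
    have : 0 < Mlo / Mhi := by positivity
    nlinarith
  · rw [div_lt_iff₀ hd2]
    have : 0 < Mhi / Mlo := by positivity
    nlinarith
end
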